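/- Let V be a real inner product space of dimension 2n equipped with an orthogonal complex structure J (i.e., J² = −id and J is an isometry). Let V₁ ⊆ V be a subspace and V₂ = V₁^⊥. Let W₁ be the orthogonal complement of V₁ ∩ J(V₁) inside V₁, and W₂ the orthogonal complement of V₂ ∩ J(V₂) inside V₂. Then dim W₁ = dim W₂. -/

import Mathlib

open Module Submodule

lemma map_orthogonal_aux {V : Type*} [NormedAddCommGroup V] [InnerProductSpace ℝ V]
    (J : V ≃ₗᵢ[ℝ] V) (K : Submodule ℝ V) :
    (K.map J.toLinearEquiv.toLinearMap)ᗮ = Kᗮ.map J.toLinearEquiv.toLinearMap := by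
  ext x
  simp only [Submodule.mem_orthogonal, Submodule.mem_map, LinearEquiv.coe_coe,
    LinearIsometryEquiv.coe_toLinearEquiv, forall_exists_index, and_imp]
  constructor
  · intro h
    refine ⟨J.symm x, fun v hv => ?_, by simp⟩
    have := h (J v) v hv rfl
    calc (inner ℝ v (J.symm x) : ℝ) = inner ℝ (J v) (J (J.symm x)) := (J.inner_map_map v _).symm
      _ = inner ℝ (J v) x := by simp
      _ = 0 := this
  · rintro ⟨y, hy, rfl⟩ u v hv rfl
    calc (inner ℝ (J v) (J y) : ℝ) = inner ℝ v y := J.inner_map_map v y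
      _ = 0 := hy v hv

theorem stmt_3 {V : Type*} [NormedAddCommGroup V] [InnerProductSpace ℝ V]
    [FiniteDimensional ℝ V] (n : ℕ) (hdim : finrank ℝ V = 2 * n)
    (J : V ≃ₗᵢ[ℝ] V) (hJ : ∀ v, J (J v) = -v)
    (V₁ : Submodule ℝ V) :
    finrank ℝ ((V₁ ⊓ V₁.map J.toLinearEquiv.toLinearMap)ᗮ ⊓ V₁ : Submodule ℝ V) =
      finrank ℝ ((V₁ᗮ ⊓ (V₁ᗮ).map J.toLinearEquiv.toLinearMap)ᗮ ⊓ V₁ᗮ : Submodule ℝ V) := by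
  set f := J.toLinearEquiv.toLinearMap
  set A := V₁ ⊓ V₁.map f with hA
  set B := V₁ᗮ ⊓ (V₁ᗮ).map f with hB
  have h1 : finrank ℝ A + finrank ℝ (Aᗮ ⊓ V₁ : Submodule ℝ V) = finrank ℝ V₁ :=
    Submodule.finrank_add_inf_finrank_orthogonal inf_le_left
  have h2 : finrank ℝ B + finrank ℝ (Bᗮ ⊓ V₁ᗮ : Submodule ℝ V) = finrank ℝ V₁ᗮ :=
    Submodule.finrank_add_inf_finrank_orthogonal inf_le_left
  have hBeq : B = (V₁ ⊔ V₁.map f)ᗮ := by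
    rw [hB, ← map_orthogonal_aux J V₁, Submodule.inf_orthogonal]
  have hmap : finrank ℝ (V₁.map f) = finrank ℝ V₁ :=
    LinearEquiv.finrank_map_eq J.toLinearEquiv V₁
  have hsup : finrank ℝ (V₁ ⊔ V₁.map f : Submodule ℝ V) + finrank ℝ A =
      finrank ℝ V₁ + finrank ℝ (V₁.map f) :=
    Submodule.finrank_sup_add_finrank_inf_eq V₁ (V₁.map f)
  have hBd : finrank ℝ (V₁ ⊔ V₁.map f : Submodule ℝ V) + finrank ℝ B = finrank ℝ V :=
    hBeq ▸ Submodule.finrank_add_finrank_orthogonal _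
  have hV1 : finrank ℝ V₁ + finrank ℝ V₁ᗮ = finrank ℝ V :=
    Submodule.finrank_add_finrank_orthogonal V₁
  have hle : finrank ℝ V₁ ≤ finrank ℝ V := Submodule.finrank_le V₁
  omega
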